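/- Explicit maximal orthotropic strain energy at fixed trace: let a, b, c, m be real numbers, t ∈ [0,1], and set Ξ = a − 2b + c − 4m. Consider the maximum S of the quadratic form a·x² + 2b·x·y + c·y² + 4m·r² over all reals x, y, r satisfying x + y = t and x² + y² + 2r² = 1/2 (this feasible set is nonempty and compact, so the maximum is attained). If Ξ < 0 and t ≤ |Ξ| / √(Ξ² + (a − c)²), then S = (t²/4)·(a + 2b + c) + m·(1 − t²) − t²·(a − c)² / (4Ξ); otherwise S = (1/4)·(a − 2b + c) + b·t² + (|a − c|/2)·t·√(1 − t²). -/
import Mathlib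

private lemma aux_key (X d t : ℝ) (h : |X| < t * Real.sqrt (X ^ 2 + d ^ 2)) :
    X ^ 2 * (1 - t ^ 2) < d ^ 2 * t ^ 2 := by
  have hs : Real.sqrt (X ^ 2 + d ^ 2) ^ 2 = X ^ 2 + d ^ 2 := Real.sq_sqrt (by positivity)
  have h0 : 0 < t * Real.sqrt (X ^ 2 + d ^ 2) := lt_of_le_of_lt (abs_nonneg X) h
  have h2 : |X| * |X| < t * Real.sqrt (X ^ 2 + d ^ 2) * (t * Real.sqrt (X ^ 2 + d ^ 2)) :=
    mul_lt_mul' h.le h (abs_nonneg X) h0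
  have h4 : t ^ 2 * Real.sqrt (X ^ 2 + d ^ 2) ^ 2 = t ^ 2 * (X ^ 2 + d ^ 2) := by rw [hs]
  nlinarith [sq_abs X, h4]

private lemma aux_td (X d t R : ℝ) (hR0 : 0 ≤ R) (ht0 : 0 ≤ t) (hRsq : R ^ 2 = 1 - t ^ 2)
    (hk : X ^ 2 * (1 - t ^ 2) < d ^ 2 * t ^ 2) : -X * R ≤ t * |d| := by
  have hA : (-X * R) ^ 2 ≤ (t * |d|) ^ 2 := by nlinarith [sq_abs d]
  exact (abs_le_of_sq_le_sq' hA (mul_nonneg ht0 (abs_nonneg d))).2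

private lemma aux_bcase (a b c m t R x : ℝ) (ht0 : 0 ≤ t) (hR0 : 0 ≤ R)
    (hRsq : R ^ 2 = 1 - t ^ 2)
    (hwle : 2 * x - t ≤ R) (hwge : -R ≤ 2 * x - t) (hd : 0 ≤ a - c)
    (H : 0 ≤ a - 2 * b + c - 4 * m ∨
      (a - 2 * b + c - 4 * m < 0 ∧ -(a - 2 * b + c - 4 * m) * R ≤ t * (a - c))) :
    a * x ^ 2 + 2 * b * (x * (t - x)) + c * (t - x) ^ 2
      + 4 * m * ((1 / 2 - x ^ 2 - (t - x) ^ 2) / 2)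
      ≤ (1 / 4) * (a - 2 * b + c) + b * t ^ 2 + ((a - c) / 2) * t * R := by
  rcases H with hX | ⟨hX, htd⟩
  · nlinarith [mul_nonneg (mul_nonneg hd ht0) (sub_nonneg.2 hwle),
      mul_nonneg (mul_nonneg hX (sub_nonneg.2 hwle))
        (by linarith : (0:ℝ) ≤ R + (2 * x - t)), hRsq]
  · have hbr : 0 ≤ (a - 2 * b + c - 4 * m) * (R + (2 * x - t)) / 4 + (a - c) * t / 2 := by
      nlinarith [mul_nonneg (neg_nonneg.2 hX.le) (sub_nonneg.2 hwle)]
    nlinarith [mul_nonneg (sub_nonneg.2 hwle) hbr, hRsq]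



set_option maxHeartbeats 2000000 in
/-- Explicit maximal orthotropic strain energy at fixed trace: the maximum of
`a·x² + 2b·x·y + c·y² + 4m·r²` over `x + y = t`, `x² + y² + 2r² = 1/2` is given
by an interior stationary value when `Ξ = a − 2b + c − 4m < 0` and
`t ≤ |Ξ|/√(Ξ² + (a−c)²)`, and by the boundary value otherwise. -/
theorem orthotropic_max_energy_at_fixed_trace
    (a b c m t : ℝ) (ht : t ∈ Set.Icc (0 : ℝ) 1) :
    IsGreatest
      {E : ℝ | ∃ x y r : ℝ, x + y = t ∧ x ^ 2 + y ^ 2 + 2 * r ^ 2 = 1 / 2 ∧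
        E = a * x ^ 2 + 2 * b * (x * y) + c * y ^ 2 + 4 * m * r ^ 2}
      (if a - 2 * b + c - 4 * m < 0 ∧
          t ≤ |a - 2 * b + c - 4 * m| /
            Real.sqrt ((a - 2 * b + c - 4 * m) ^ 2 + (a - c) ^ 2) then
        (t ^ 2 / 4) * (a + 2 * b + c) + m * (1 - t ^ 2)
          - t ^ 2 * (a - c) ^ 2 / (4 * (a - 2 * b + c - 4 * m))
      else
        (1 / 4) * (a - 2 * b + c) + b * t ^ 2
          + (|a - c| / 2) * t * Real.sqrt (1 - t ^ 2)) := by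
  obtain ⟨ht0, ht1⟩ := ht
  have h1t : (0:ℝ) ≤ 1 - t ^ 2 := by nlinarith
  set R : ℝ := Real.sqrt (1 - t ^ 2) with hRdef
  have hRsq : R ^ 2 = 1 - t ^ 2 := Real.sq_sqrt h1t
  have hR0 : 0 ≤ R := Real.sqrt_nonneg _
  set Ξ : ℝ := a - 2 * b + c - 4 * m with hXdef
  split_ifs with hcond
  · -- interior stationary point case
    obtain ⟨hXneg, hthr⟩ := hcond
    have hXne : Ξ ≠ 0 := ne_of_lt hXneg
    have hs0 : (0:ℝ) < Real.sqrt (Ξ ^ 2 + (a - c) ^ 2) := by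
      apply Real.sqrt_pos.2
      positivity
    have hssq : Real.sqrt (Ξ ^ 2 + (a - c) ^ 2) ^ 2 = Ξ ^ 2 + (a - c) ^ 2 :=
      Real.sq_sqrt (by positivity)
    have hts : t * Real.sqrt (Ξ ^ 2 + (a - c) ^ 2) ≤ |Ξ| := by
      rw [le_div_iff₀ hs0] at hthr; linarith
    have hkey : (a - c) ^ 2 * t ^ 2 ≤ Ξ ^ 2 * (1 - t ^ 2) := by
      have h2 : t * Real.sqrt (Ξ ^ 2 + (a - c) ^ 2) *
          (t * Real.sqrt (Ξ ^ 2 + (a - c) ^ 2)) ≤ |Ξ| * |Ξ| :=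
        mul_le_mul hts hts (by positivity) (abs_nonneg Ξ)
      have h3 : |Ξ| * |Ξ| = Ξ ^ 2 := by rw [← sq_abs]; ring
      nlinarith [hssq]
    constructor
    · -- membership
      set u : ℝ := -((a - c) * t) / (2 * Ξ) with hudef
      have hu2 : u ^ 2 ≤ (1 - t ^ 2) / 4 := by
        rw [hudef, div_pow, div_le_div_iff₀ (by positivity) (by norm_num)]
        nlinarith [hkey]
      refine ⟨t / 2 + u, t / 2 - u, Real.sqrt ((1 - t ^ 2) / 4 - u ^ 2), by ring, ?_, ?_⟩
      · have hr2 : Real.sqrt ((1 - t ^ 2) / 4 - u ^ 2) ^ 2 = (1 - t ^ 2) / 4 - u ^ 2 :=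
          Real.sq_sqrt (by linarith)
        rw [hr2]; ring
      · have hr2 : Real.sqrt ((1 - t ^ 2) / 4 - u ^ 2) ^ 2 = (1 - t ^ 2) / 4 - u ^ 2 :=
          Real.sq_sqrt (by linarith)
        rw [hr2, hudef]
        field_simp
        ring
    · -- upper bound
      rintro E ⟨x, y, r, hxy, hnorm, rfl⟩
      have hy : y = t - x := by linarith
      subst hy
      have hr2 : r ^ 2 = (1 / 2 - x ^ 2 - (t - x) ^ 2) / 2 := by linarith
      rw [hr2, ← sub_nonneg]
      have hkey2 : ((t ^ 2 / 4) * (a + 2 * b + c) + m * (1 - t ^ 2)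
            - t ^ 2 * (a - c) ^ 2 / (4 * Ξ)
            - (a * x ^ 2 + 2 * b * (x * (t - x)) + c * (t - x) ^ 2
              + 4 * m * ((1 / 2 - x ^ 2 - (t - x) ^ 2) / 2))) * (-(4 * Ξ))
          = (Ξ * (2 * x - t) + (a - c) * t) ^ 2 := by
        field_simp
        ring
      have h4 : (0:ℝ) < -(4 * Ξ) := by linarith
      have h5 : (0:ℝ) ≤ ((t ^ 2 / 4) * (a + 2 * b + c) + m * (1 - t ^ 2)
            - t ^ 2 * (a - c) ^ 2 / (4 * Ξ)
            - (a * x ^ 2 + 2 * b * (x * (t - x)) + c * (t - x) ^ 2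
              + 4 * m * ((1 / 2 - x ^ 2 - (t - x) ^ 2) / 2))) * (-(4 * Ξ)) := by
        rw [hkey2]; positivity
      exact (mul_nonneg_iff_of_pos_right h4).mp h5
  · -- boundary case
    constructor
    · -- membership: endpoint u = ±R/2
      rcases le_total c a with hac | hac
      · refine ⟨t / 2 + R / 2, t / 2 - R / 2, 0, by ring, by linear_combination hRsq / 2, ?_⟩
        rw [abs_of_nonneg (by linarith : (0:ℝ) ≤ a - c)]
        linear_combination (-(a - 2 * b + c) / 4) * hRsq
      · refine ⟨t / 2 - R / 2, t / 2 + R / 2, 0, by ring, by linear_combination hRsq / 2, ?_⟩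
        rw [abs_of_nonpos (by linarith : a - c ≤ 0)]
        linear_combination (-(a - 2 * b + c) / 4) * hRsq
    · -- upper bound
      rintro E ⟨x, y, r, hxy, hnorm, rfl⟩
      have hy : y = t - x := by linarith
      subst hy
      have hr2 : r ^ 2 = (1 / 2 - x ^ 2 - (t - x) ^ 2) / 2 := by linarith
      rw [hr2]
      have hw2 : (2 * x - t) ^ 2 ≤ R ^ 2 := by
        rw [hRsq]; nlinarith [sq_nonneg r]
      obtain ⟨hwge, hwle⟩ : -R ≤ 2 * x - t ∧ 2 * x - t ≤ R :=
        abs_le_of_sq_le_sq' hw2 hR0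
      have H : 0 ≤ Ξ ∨ (Ξ < 0 ∧ -Ξ * R ≤ t * |a - c|) := by
        rcases lt_or_ge Ξ 0 with hXneg | hXpos
        · right
          refine ⟨hXneg, ?_⟩
          have hthr : |Ξ| / Real.sqrt (Ξ ^ 2 + (a - c) ^ 2) < t := by
            by_contra h
            exact hcond ⟨hXneg, not_lt.mp h⟩
          have hXne : Ξ ≠ 0 := ne_of_lt hXneg
          have hs0 : (0:ℝ) < Real.sqrt (Ξ ^ 2 + (a - c) ^ 2) := by
            apply Real.sqrt_pos.2; positivity
          have hts : |Ξ| < t * Real.sqrt (Ξ ^ 2 + (a - c) ^ 2) := by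
            rw [div_lt_iff₀ hs0] at hthr
            nlinarith [Real.sqrt_nonneg (Ξ ^ 2 + (a - c) ^ 2)]
          exact aux_td Ξ (a - c) t R hR0 ht0 hRsq (aux_key Ξ (a - c) t hts)
        · left; exact hXpos
      rw [hXdef] at H
      rcases le_total c a with hac | hac
      · rw [abs_of_nonneg (by linarith : (0:ℝ) ≤ a - c)]
        rw [abs_of_nonneg (by linarith : (0:ℝ) ≤ a - c)] at H
        exact aux_bcase a b c m t R x ht0 hR0 hRsq hwle hwge (by linarith) H
      · rw [abs_of_nonpos (by linarith : a - c ≤ 0)]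
        rw [abs_of_nonpos (by linarith : a - c ≤ 0)] at H
        have H' : 0 ≤ c - 2 * b + a - 4 * m ∨
            (c - 2 * b + a - 4 * m < 0 ∧ -(c - 2 * b + a - 4 * m) * R ≤ t * (c - a)) := by
          rcases H with h | ⟨h1, h2⟩
          exacts [Or.inl (by linarith), Or.inr ⟨by linarith, by linarith⟩]
        have key := aux_bcase c b a m t R (t - x) ht0 hR0 hRsq
          (by linarith) (by linarith) (by linarith) H'
        nlinarith [key]
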